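/- Let A be a commutative ring of prime characteristic p with a Frobenius splitting φ : A → A (additive, φ(x^p y) = x φ(y), φ(1) = 1). Suppose I and J are ideals of A that are compatibly split, i.e., φ(I) ⊆ I and φ(J) ⊆ J. Then the ideal I + J is also compatibly split, and I + J is a radical ideal. -/

import Mathlib

/-- If `φ` is a Frobenius splitting of a commutative ring `A` of prime characteristic
`p`, and ideals `I`, `J` are compatibly split (`φ(I) ⊆ I`, `φ(J) ⊆ J`), then `I + J`
is compatibly split and is a radical ideal. -/
theorem stmt11 (p : ℕ) (hp : p.Prime) (A : Type*) [CommRing A] [CharP A p]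
    (φ : A → A)
    (hadd : ∀ x y : A, φ (x + y) = φ x + φ y)
    (hsplit : ∀ x y : A, φ (x ^ p * y) = x * φ y)
    (hone : φ 1 = 1)
    (I J : Ideal A)
    (hI : ∀ x ∈ I, φ x ∈ I) (hJ : ∀ x ∈ J, φ x ∈ J) :
    (∀ x ∈ I + J, φ x ∈ I + J) ∧ (I + J).radical = I + J := by
  have hK : ∀ x ∈ I + J, φ x ∈ I + J := by
    intro x hx
    obtain ⟨a, ha, b, hb, rfl⟩ := Submodule.mem_sup.mp hx
    rw [hadd]
    exact Submodule.add_mem_sup (hI a ha) (hJ b hb)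
  refine ⟨hK, ?_⟩
  -- key: x^p ∈ K → x ∈ K
  have hpow : ∀ x : A, x ^ p ∈ I + J → x ∈ I + J := by
    intro x hx
    have : φ (x ^ p) = x := by
      have := hsplit x 1
      rwa [mul_one, hone, mul_one] at this
    rw [← this]
    exact hK _ hx
  have hiter : ∀ (m : ℕ) (x : A), x ^ (p ^ m) ∈ I + J → x ∈ I + J := by
    intro m
    induction m with
    | zero => intro x hx; simpa using hx
    | succ n ih =>
      intro x hx
      apply ih
      apply hpow
      rw [← pow_mul, ← pow_succ]; exact hx
  apply le_antisymm _ Ideal.le_radical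
  intro x hx
  obtain ⟨n, hn⟩ := hx
  rcases Nat.eq_zero_or_pos n with rfl | hn0
  · simp only [pow_zero] at hn
    have : (1 : A) ∈ I + J := hn
    simpa using (I + J).mul_mem_left x this
  · apply hiter n
    have hle : n ≤ p ^ n := le_of_lt (Nat.lt_pow_self hp.one_lt)
    have : x ^ (p ^ n) = x ^ n * x ^ (p ^ n - n) := by
      rw [← pow_add, Nat.add_sub_cancel' hle]
    rw [this]
    exact (I + J).mul_mem_right _ hn
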